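/- Let ℓ, n, m ∈ ℕ, all ≥ 1, and let S^H_{fi} = {(E,J,Q,B) ∈ Σ^H_{ℓ,n,m} : rank[E, B] = rank[E, JQ, B]} be the set of freely initializable port-Hamiltonian descriptor systems. Then S^H_{fi} is relative generic in Σ^H_{ℓ,n,m} if, and only if, ℓ ≤ n+m; moreover, if ℓ > n+m, then the complement of S^H_{fi} is relative generic in Σ^H_{ℓ,n,m}. -/

import Mathlib

open Matrix

/-- An algebraic set in `ℝ^ι`: the common zero locus of finitely many real
polynomials in the variables indexed by `ι`. -/
def IsAlgebraicSet {ι : Type} [Fintype ι] (W : Set (ι → ℝ)) : Prop :=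
  ∃ (k : ℕ) (p : Fin k → MvPolynomial ι ℝ),
    W = {x | ∀ i, MvPolynomial.eval x (p i) = 0}

/-- `S` is relative generic in `V`. -/
def RelGeneric {ι : Type} [Fintype ι] (S V : Set (ι → ℝ)) : Prop :=
  ∃ W : Set (ι → ℝ), IsAlgebraicSet W ∧ Sᶜ ∩ V ⊆ W ∩ V ∧ V ⊆ closure (Wᶜ ∩ V)

/-- Coordinates of the product `ℝ^{ℓ×n} × ℝ^{ℓ×ℓ} × ℝ^{ℓ×n} × ℝ^{ℓ×m}`
of matrix spaces, hosting the tuples `(E, J, Q, B)`. -/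
abbrev IdxH (ℓ n m : ℕ) :=
  (Fin ℓ × Fin n) ⊕ (Fin ℓ × Fin ℓ) ⊕ (Fin ℓ × Fin n) ⊕ (Fin ℓ × Fin m)

/-- The matrix `E` of a tuple `(E, J, Q, B)`. -/
def mE {ℓ n m : ℕ} (x : IdxH ℓ n m → ℝ) : Matrix (Fin ℓ) (Fin n) ℝ :=
  Matrix.of fun i j => x (Sum.inl (i, j))

/-- The matrix `J` of a tuple `(E, J, Q, B)`. -/
def mJ {ℓ n m : ℕ} (x : IdxH ℓ n m → ℝ) : Matrix (Fin ℓ) (Fin ℓ) ℝ :=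
  Matrix.of fun i j => x (Sum.inr (Sum.inl (i, j)))

/-- The matrix `Q` of a tuple `(E, J, Q, B)`. -/
def mQ {ℓ n m : ℕ} (x : IdxH ℓ n m → ℝ) : Matrix (Fin ℓ) (Fin n) ℝ :=
  Matrix.of fun i j => x (Sum.inr (Sum.inr (Sum.inl (i, j))))

/-- The matrix `B` of a tuple `(E, J, Q, B)`. -/
def mB {ℓ n m : ℕ} (x : IdxH ℓ n m → ℝ) : Matrix (Fin ℓ) (Fin m) ℝ :=
  Matrix.of fun i j => x (Sum.inr (Sum.inr (Sum.inr (i, j))))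

/-- The set `Σ^H_{ℓ,n,m}` of (conservative) port-Hamiltonian tuples
`(E, J, Q, B)` with `Jᵀ = -J` and `EᵀQ = QᵀE ≥ 0`. -/
def SigmaH (ℓ n m : ℕ) : Set (IdxH ℓ n m → ℝ) :=
  {x | (mJ x)ᵀ = -(mJ x) ∧ (mE x)ᵀ * mQ x = (mQ x)ᵀ * mE x ∧
       ((mE x)ᵀ * mQ x).PosSemidef}

set_option linter.unusedSectionVars false

open Matrix Polynomial Filter

variable {α β γ : Type*} [Fintype α] [Fintype β]

/- vecMulVec algebra -/
lemma vmv_mulVec (a : α → ℝ) (b : β → ℝ) (z : β → ℝ) :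
    vecMulVec a b *ᵥ z = (b ⬝ᵥ z) • a := by
  ext i; simp [vecMulVec, mulVec, dotProduct, Finset.mul_sum, mul_comm, mul_left_comm]

lemma vecMul_vmv (u : α → ℝ) (a : α → ℝ) (b : β → ℝ) :
    u ᵥ* vecMulVec a b = (u ⬝ᵥ a) • b := by
  ext j; simp only [vecMulVec, Matrix.of_apply, vecMul, dotProduct, Pi.smul_apply,
    smul_eq_mul, Finset.mul_sum]
  rw [Finset.sum_mul]
  exact Finset.sum_congr rfl fun _ _ => by ring

lemma vmv_mul [Fintype γ] (a : α → ℝ) (b : β → ℝ) (M : Matrix β γ ℝ) :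
    vecMulVec a b * M = vecMulVec a (b ᵥ* M) := by
  ext i j; simp [vecMulVec, Matrix.mul_apply, vecMul, dotProduct, Finset.mul_sum, mul_assoc]

lemma mul_vmv [Fintype γ] (M : Matrix α β ℝ) (a : β → ℝ) (b : γ → ℝ) :
    M * vecMulVec a b = vecMulVec (M *ᵥ a) b := by
  ext i j; simp only [vecMulVec, Matrix.of_apply, Matrix.mul_apply, mulVec, dotProduct]
  rw [Finset.sum_mul]
  exact Finset.sum_congr rfl fun _ _ => by ring

lemma vmv_transpose (a : α → ℝ) (b : β → ℝ) :
    (vecMulVec a b)ᵀ = vecMulVec b a := by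
  ext i j; simp [vecMulVec, mul_comm]

lemma vmv_zero_left (b : β → ℝ) : vecMulVec (0 : α → ℝ) b = 0 := by
  ext i j; simp [vecMulVec]

lemma vmv_zero_right (a : α → ℝ) : vecMulVec a (0 : β → ℝ) = 0 := by
  ext i j; simp [vecMulVec]

/- sums -/
lemma vecMul_sum_mat {s : Finset γ} (u : α → ℝ) (M : γ → Matrix α β ℝ) :
    u ᵥ* (∑ j ∈ s, M j) = ∑ j ∈ s, u ᵥ* M j := by
  ext x
  simp only [vecMul, dotProduct, Matrix.sum_apply, Finset.mul_sum, Finset.sum_apply]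
  exact Finset.sum_comm

lemma sum_mat_mulVec {s : Finset γ} (M : γ → Matrix α β ℝ) (z : β → ℝ) :
    (∑ j ∈ s, M j) *ᵥ z = ∑ j ∈ s, M j *ᵥ z := by
  ext x
  simp only [mulVec, dotProduct, Matrix.sum_apply, Finset.sum_mul, Finset.sum_apply]
  exact Finset.sum_comm

/- Gram arguments -/
lemma gram_mulVec_eq_zero {A : Matrix α β ℝ} {u : α → ℝ} (h : (A * Aᵀ) *ᵥ u = 0) :
    u ᵥ* A = 0 := by
  have h1 : (u ᵥ* A) ⬝ᵥ (u ᵥ* A) = 0 := by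
    have : (u ᵥ* A) ⬝ᵥ (u ᵥ* A) = u ⬝ᵥ ((A * Aᵀ) *ᵥ u) := by
      rw [← Matrix.mulVec_mulVec, Matrix.dotProduct_mulVec, Matrix.mulVec_transpose]
    rw [this, h, dotProduct_zero]
  exact dotProduct_self_eq_zero.mp h1

lemma gram_col_mulVec_eq_zero {A : Matrix α β ℝ} {z : β → ℝ} (h : (Aᵀ * A) *ᵥ z = 0) :
    A *ᵥ z = 0 := by
  have := gram_mulVec_eq_zero (A := Aᵀ) (by rwa [Matrix.transpose_transpose])
  rwa [← Matrix.mulVec_transpose, Matrix.transpose_transpose] at this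

/-- row-Gram determinant nonzero iff trivial left kernel -/
lemma det_row_gram_ne_zero_iff [DecidableEq α] (A : Matrix α β ℝ) :
    (A * Aᵀ).det ≠ 0 ↔ ∀ u : α → ℝ, u ᵥ* A = 0 → u = 0 := by
  constructor
  · intro hdet u hu
    by_contra hne
    exact hdet (Matrix.exists_mulVec_eq_zero_iff.mp ⟨u, hne, by
      rw [← Matrix.mulVec_mulVec]
      have : Aᵀ *ᵥ u = 0 := by rw [Matrix.mulVec_transpose, hu]
      rw [this, Matrix.mulVec_zero]⟩)
  · intro h hdet
    obtain ⟨v, hv0, hv⟩ := Matrix.exists_mulVec_eq_zero_iff.mpr hdet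
    exact hv0 (h v (gram_mulVec_eq_zero hv))

/-- column-Gram determinant nonzero iff trivial kernel -/
lemma det_col_gram_ne_zero_iff [DecidableEq β] (A : Matrix α β ℝ) :
    (Aᵀ * A).det ≠ 0 ↔ ∀ z : β → ℝ, A *ᵥ z = 0 → z = 0 := by
  constructor
  · intro hdet z hz
    by_contra hne
    exact hdet (Matrix.exists_mulVec_eq_zero_iff.mp ⟨z, hne, by
      rw [← Matrix.mulVec_mulVec, hz, Matrix.mulVec_zero]⟩)
  · intro h hdet
    obtain ⟨v, hv0, hv⟩ := Matrix.exists_mulVec_eq_zero_iff.mpr hdet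
    exact hv0 (h v (gram_col_mulVec_eq_zero hv))

/- rank lemmas -/
lemma rank_eq_card_width_of_inj (A : Matrix α β ℝ) (h : ∀ z : β → ℝ, A *ᵥ z = 0 → z = 0) :
    A.rank = Fintype.card β := by
  have hinj : Function.Injective A.mulVecLin := by
    rw [← LinearMap.ker_eq_bot]
    refine LinearMap.ker_eq_bot'.mpr fun z hz => h z hz
  rw [Matrix.rank, LinearMap.finrank_range_of_inj hinj, Module.finrank_fintype_fun_eq_card]

lemma rank_eq_card_height_of_inj [DecidableEq α] (A : Matrix α β ℝ)
    (h : ∀ u : α → ℝ, u ᵥ* A = 0 → u = 0) : A.rank = Fintype.card α := by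
  rw [← Matrix.rank_transpose]
  exact rank_eq_card_width_of_inj Aᵀ fun u hu => h u (by rwa [Matrix.mulVec_transpose] at hu)

lemma rank_le_of_range_subset [Fintype γ] (A : Matrix α β ℝ) (B : Matrix α γ ℝ)
    (h : ∀ z : β → ℝ, ∃ w : γ → ℝ, B *ᵥ w = A *ᵥ z) : A.rank ≤ B.rank := by
  have hle : LinearMap.range A.mulVecLin ≤ LinearMap.range B.mulVecLin := by
    rintro _ ⟨z, rfl⟩
    obtain ⟨w, hw⟩ := h z
    exact ⟨w, hw⟩
  exact Submodule.finrank_mono hle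

lemma sum_dotProduct' {s : Finset γ} (f : γ → α → ℝ) (a : α → ℝ) :
    (∑ j ∈ s, f j) ⬝ᵥ a = ∑ j ∈ s, f j ⬝ᵥ a := by
  simp only [dotProduct, Finset.sum_apply, Finset.sum_mul]
  exact Finset.sum_comm

lemma dotProduct_sum' {s : Finset γ} (a : α → ℝ) (f : γ → α → ℝ) :
    a ⬝ᵥ (∑ j ∈ s, f j) = ∑ j ∈ s, a ⬝ᵥ f j := by
  simp only [dotProduct, Finset.sum_apply, Finset.mul_sum]
  exact Finset.sum_comm

lemma mulVec_sum_vec {s : Finset γ} (A : Matrix α β ℝ) (f : γ → β → ℝ) :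
    A *ᵥ (∑ j ∈ s, f j) = ∑ j ∈ s, A *ᵥ f j :=
  map_sum A.mulVecLin f s

lemma vecMul_sum_vec {s : Finset γ} (f : γ → α → ℝ) (A : Matrix α β ℝ) :
    (∑ j ∈ s, f j) ᵥ* A = ∑ j ∈ s, f j ᵥ* A := by
  rw [← Matrix.mulVec_transpose A (∑ j ∈ s, f j), mulVec_sum_vec]
  exact Finset.sum_congr rfl fun j _ => Matrix.mulVec_transpose A (f j)

/-- From the kernel of `mulVecLin A`, extract a `ℕ`-indexed "good family". -/
lemma exists_good_family {α β : Type*} [Fintype α] [Fintype β] (A : Matrix α β ℝ) :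
    ∃ v : ℕ → (β → ℝ),
      (∀ j, A *ᵥ v j = 0) ∧
      (∀ j, Module.finrank ℝ (LinearMap.ker A.mulVecLin) ≤ j → v j = 0) ∧
      (∀ c : ℕ → ℝ, (∑ j ∈ Finset.range (Module.finrank ℝ (LinearMap.ker A.mulVecLin)),
          c j • v j) = 0 → ∀ j < Module.finrank ℝ (LinearMap.ker A.mulVecLin), c j = 0) ∧
      (∀ a : β → ℝ, A *ᵥ a = 0 →
        (∀ j < Module.finrank ℝ (LinearMap.ker A.mulVecLin), v j ⬝ᵥ a = 0) → a = 0) := by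
  set K := LinearMap.ker A.mulVecLin with hK
  set d := Module.finrank ℝ K with hd
  let bas := Module.finBasis ℝ K
  set v : ℕ → (β → ℝ) := fun j => if h : j < d then ((bas ⟨j, h⟩ : K) : β → ℝ) else 0 with hv
  have hmem : ∀ j (h : j < d), v j = ((bas ⟨j, h⟩ : K) : β → ℝ) := fun j h => by
    simp [hv, dif_pos h]
  have hindep : LinearIndependent ℝ (fun i : Fin d => ((bas i : K) : β → ℝ)) := by
    have := bas.linearIndependent.map' K.subtype (Submodule.ker_subtype K)
    exact this
  refine ⟨v, ?_, ?_, ?_, ?_⟩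
  · intro j
    by_cases h : j < d
    · rw [hmem j h]
      exact (bas ⟨j, h⟩).2
    · simp [hv, dif_neg h]
  · intro j hj; simp [hv, dif_neg (Nat.not_lt.mpr hj)]
  · intro c hc j hj
    have hsum : ∑ i : Fin d, c i.val • v i.val = 0 := by
      rw [Fin.sum_univ_eq_sum_range (fun j => c j • v j) d]; exact hc
    have hsum2 : ∑ i : Fin d, c i.val • (fun i : Fin d => ((bas i : K) : β → ℝ)) i = 0 := by
      rw [← hsum]
      exact Finset.sum_congr rfl fun i _ => by rw [hmem i.val i.isLt]
    have := Fintype.linearIndependent_iff.mp hindep (fun i => c i.val) hsum2 ⟨j, hj⟩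
    exact this
  · intro a ha hperp
    have haK : a ∈ K := ha
    have hrepr : ∑ i : Fin d, (bas.repr ⟨a, haK⟩) i • bas i = ⟨a, haK⟩ := bas.sum_repr ⟨a, haK⟩
    have hval : ∑ i : Fin d, (bas.repr ⟨a, haK⟩) i • ((bas i : K) : β → ℝ) = a := by
      have := congrArg (Submodule.subtype K) hrepr
      simpa only [map_sum, map_smul, Submodule.coe_subtype] using this
    have : a ⬝ᵥ a = 0 := by
      nth_rewrite 1 [← hval]
      rw [sum_dotProduct']
      refine Finset.sum_eq_zero fun i _ => ?_
      have h1 : ((bas i : K) : β → ℝ) ⬝ᵥ a = 0 := by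
        have := hperp i.val i.isLt
        rwa [hmem i.val i.isLt] at this
      rw [smul_dotProduct, h1, smul_zero]
    exact dotProduct_self_eq_zero.mp this

/-- Extend a truncated family sum. -/
lemma sum_smul_extend {V : Type*} [AddCommGroup V] [Module ℝ V]
    (v : ℕ → V) (k : ℕ) (hv : ∀ j, k ≤ j → v j = 0) (M : ℕ) (c : ℕ → ℝ) :
    ∑ j ∈ Finset.range M, c j • v j
      = ∑ j ∈ Finset.range k, (if j < M then c j else 0) • v j := by
  have h1 : ∑ j ∈ Finset.range M, c j • v j
      = ∑ j ∈ Finset.range (min M k), c j • v j := by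
    refine (Finset.sum_subset (Finset.range_subset_range.mpr (min_le_left M k)) ?_).symm
    intro j hj hj2
    simp only [Finset.mem_range] at hj hj2
    have : k ≤ j := by omega
    rw [hv j this, smul_zero]
  have h2 : ∑ j ∈ Finset.range k, (if j < M then c j else 0) • v j
      = ∑ j ∈ Finset.range (min M k), (if j < M then c j else 0) • v j := by
    refine (Finset.sum_subset (Finset.range_subset_range.mpr (min_le_right M k)) ?_).symm
    intro j hj hj2
    simp only [Finset.mem_range] at hj hj2
    have : ¬ j < M := by omega
    rw [if_neg this, zero_smul]
  rw [h1, h2]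
  refine Finset.sum_congr rfl fun j hj => ?_
  simp only [Finset.mem_range] at hj
  rw [if_pos (by omega)]

/-- Central construction: given `Q`, a direction `F` orthogonal to `Q` and a `C` such that
`[Q+F, C]` has full row rank (if `ℓ ≤ n+m`), resp. full column rank (if `n+m ≤ ℓ`). -/
lemma key_construction (ℓ n m : ℕ) (Q : Matrix (Fin ℓ) (Fin n) ℝ) :
    ∃ (F : Matrix (Fin ℓ) (Fin n) ℝ) (C : Matrix (Fin ℓ) (Fin m) ℝ),
      Fᵀ * Q = 0 ∧ Q * Fᵀ = 0 ∧
      (ℓ ≤ n + m → ∀ u : Fin ℓ → ℝ, u ᵥ* (Q + F) = 0 → u ᵥ* C = 0 → u = 0) ∧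
      (n + m ≤ ℓ → ∀ (a : Fin n → ℝ) (b : Fin m → ℝ),
        (Q + F) *ᵥ a + C *ᵥ b = 0 → a = 0 ∧ b = 0) := by
  classical
  obtain ⟨v, hvker, hvtrunc, hvindep, hvspan⟩ := exists_good_family Q
  obtain ⟨w, hwker, hwtrunc, hwindep, hwspan⟩ := exists_good_family Qᵀ
  set k := Module.finrank ℝ (LinearMap.ker Q.mulVecLin) with hkdef
  set t := Module.finrank ℝ (LinearMap.ker Qᵀ.mulVecLin) with htdef
  have hkr : Q.rank + k = n := by
    have := LinearMap.finrank_range_add_finrank_ker Q.mulVecLin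
    rwa [Module.finrank_fintype_fun_eq_card, Fintype.card_fin] at this
  have htr : Q.rank + t = ℓ := by
    have := LinearMap.finrank_range_add_finrank_ker Qᵀ.mulVecLin
    rw [Module.finrank_fintype_fun_eq_card, Fintype.card_fin] at this
    rw [← Matrix.rank_transpose Q]
    exact this
  have hwQ : ∀ j, w j ᵥ* Q = 0 := fun j => by
    have := hwker j; rwa [Matrix.mulVec_transpose] at this
  set cf : ℕ → (Fin m → ℝ) := fun j i => if j = k + (i : ℕ) then 1 else 0 with hcf
  set F : Matrix (Fin ℓ) (Fin n) ℝ := ∑ j ∈ Finset.range t, vecMulVec (w j) (v j) with hF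
  set C : Matrix (Fin ℓ) (Fin m) ℝ := ∑ j ∈ Finset.range t, vecMulVec (w j) (cf j) with hC
  have cf_apply : ∀ (j : ℕ) (i : Fin m), cf j i = if j = k + (i : ℕ) then 1 else 0 :=
    fun j i => rfl
  have cf_lt : ∀ (j : ℕ), j < k → cf j = 0 := by
    intro j hj
    funext i
    rw [cf_apply, if_neg (by omega)]
    rfl
  have cf_dot : ∀ (i : Fin m) (b : Fin m → ℝ), cf (k + (i : ℕ)) ⬝ᵥ b = b i := by
    intro i b
    rw [dotProduct]
    rw [Finset.sum_eq_single i]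
    · rw [cf_apply, if_pos rfl, one_mul]
    · intro i' _ hne
      rw [cf_apply, if_neg (by
        intro hcontra
        exact hne (Fin.ext (by omega))), zero_mul]
    · intro hmem
      exact absurd (Finset.mem_univ i) hmem
  have hFT : Fᵀ = ∑ j ∈ Finset.range t, vecMulVec (v j) (w j) := by
    rw [hF, Matrix.transpose_sum]
    exact Finset.sum_congr rfl fun j _ => vmv_transpose _ _
  refine ⟨F, C, ?_, ?_, ?_, ?_⟩
  · rw [hFT, Matrix.sum_mul]
    exact Finset.sum_eq_zero fun j _ => by rw [vmv_mul, hwQ j, vmv_zero_right]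
  · rw [hFT, Matrix.mul_sum]
    exact Finset.sum_eq_zero fun j _ => by rw [mul_vmv, hvker j, vmv_zero_left]
  · -- full row rank case
    intro hlnm u hu huC
    have htk : t ≤ k + m := by omega
    have hvF : u ᵥ* F = ∑ j ∈ Finset.range t, (u ⬝ᵥ w j) • v j := by
      rw [hF, vecMul_sum_mat]
      exact Finset.sum_congr rfl fun j _ => vecMul_vmv _ _ _
    have hvC : u ᵥ* C = ∑ j ∈ Finset.range t, (u ⬝ᵥ w j) • cf j := by
      rw [hC, vecMul_sum_mat]
      exact Finset.sum_congr rfl fun j _ => vecMul_vmv _ _ _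
    have hsplit : u ᵥ* Q + u ᵥ* F = 0 := by rw [← Matrix.vecMul_add]; exact hu
    have hzker : Q *ᵥ (u ᵥ* F) = 0 := by
      rw [hvF, mulVec_sum_vec]
      refine Finset.sum_eq_zero fun j _ => ?_
      rw [Matrix.mulVec_smul, hvker j, smul_zero]
    have hQu : u ᵥ* Q = 0 := by
      have hy : Q *ᵥ (u ᵥ* Q) = 0 := by
        have h1 : u ᵥ* Q = -(u ᵥ* F) := by linear_combination (norm := module) hsplit
        rw [h1, Matrix.mulVec_neg, hzker, neg_zero]
      have h2 : (u ᵥ* Q) ⬝ᵥ (u ᵥ* Q) = 0 := by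
        have := Matrix.dotProduct_mulVec u Q (u ᵥ* Q)
        rw [hy, dotProduct_zero] at this
        exact this.symm
      exact dotProduct_self_eq_zero.mp h2
    have hFzero : ∑ j ∈ Finset.range t, (u ⬝ᵥ w j) • v j = 0 := by
      rw [← hvF]
      have := hsplit
      rw [hQu, zero_add] at this
      exact this
    have hcoef : ∀ j < k, (if j < t then u ⬝ᵥ w j else 0) = 0 := by
      apply hvindep
      rw [← sum_smul_extend v k hvtrunc t]
      exact hFzero
    -- now show all w-coefficients vanish
    have hall : ∀ j < t, w j ⬝ᵥ u = 0 := by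
      intro j hj
      rcases lt_or_ge j k with hjk | hjk
      · have := hcoef j hjk
        rw [if_pos hj] at this
        rwa [dotProduct_comm]
      · -- use C
        have hjm : j - k < m := by omega
        set i0 : Fin m := ⟨j - k, hjm⟩ with hi0
        have hj0 : j = k + (i0 : ℕ) := by simp [hi0]; omega
        have hCj : (u ᵥ* C) i0 = u ⬝ᵥ w j := by
          rw [hvC, Finset.sum_apply]
          have : ∀ p ∈ Finset.range t, ((u ⬝ᵥ w p) • cf p) i0
              = if p = k + (i0 : ℕ) then u ⬝ᵥ w p else 0 := by
            intro p _
            rw [Pi.smul_apply, cf_apply, smul_eq_mul, mul_ite, mul_one, mul_zero]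
          rw [Finset.sum_congr rfl this, Finset.sum_ite_eq' (Finset.range t) (k + (i0 : ℕ))
            (fun p => u ⬝ᵥ w p), if_pos (Finset.mem_range.mpr (by omega)), ← hj0]
        rw [huC] at hCj
        rw [dotProduct_comm]
        simpa using hCj.symm
    exact hwspan u (by rwa [Matrix.mulVec_transpose]) hall
  · -- full column rank case
    intro hnml a b heq
    have hkt : k + m ≤ t := by omega
    have hFa : F *ᵥ a = ∑ j ∈ Finset.range t, (v j ⬝ᵥ a) • w j := by
      rw [hF, sum_mat_mulVec]
      exact Finset.sum_congr rfl fun j _ => vmv_mulVec _ _ _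
    have hCb : C *ᵥ b = ∑ j ∈ Finset.range t, (cf j ⬝ᵥ b) • w j := by
      rw [hC, sum_mat_mulVec]
      exact Finset.sum_congr rfl fun j _ => vmv_mulVec _ _ _
    set y : Fin ℓ → ℝ := ∑ j ∈ Finset.range t, ((v j ⬝ᵥ a) + (cf j ⬝ᵥ b)) • w j with hy
    have heq' : Q *ᵥ a + y = 0 := by
      rw [← heq, Matrix.add_mulVec, hy]
      rw [add_assoc]
      congr 1
      rw [hFa, hCb, ← Finset.sum_add_distrib]
      exact Finset.sum_congr rfl fun j _ => add_smul _ _ _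
    have hyQ : y ᵥ* Q = 0 := by
      rw [hy, vecMul_sum_vec]
      refine Finset.sum_eq_zero fun j _ => ?_
      rw [← Matrix.mulVec_transpose, Matrix.mulVec_smul, Matrix.mulVec_transpose,
        hwQ j, smul_zero]
    have hQa : Q *ᵥ a = 0 := by
      have h1 : Q *ᵥ a = -y := by linear_combination (norm := module) heq'
      have h2 : (Q *ᵥ a) ⬝ᵥ (Q *ᵥ a) = 0 := by
        nth_rewrite 2 [h1]
        rw [dotProduct_neg]
        have : (Q *ᵥ a) ⬝ᵥ y = y ⬝ᵥ (Q *ᵥ a) := dotProduct_comm _ _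
        rw [this, Matrix.dotProduct_mulVec, hyQ, zero_dotProduct, neg_zero]
      exact dotProduct_self_eq_zero.mp h2
    have hy0 : y = 0 := by
      have := heq'
      rw [hQa, zero_add] at this
      exact this
    have hcoef : ∀ j < t, (v j ⬝ᵥ a) + (cf j ⬝ᵥ b) = 0 := by
      apply hwindep
      rw [← hy]
      exact hy0
    constructor
    · apply hvspan a hQa
      intro j hj
      have hjt : j < t := by omega
      have := hcoef j hjt
      have hcf0 : cf j = 0 := cf_lt j hj
      rw [hcf0, zero_dotProduct, add_zero] at this
      exact this
    · funext i
      have hjt : k + i.val < t := by omega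
      have := hcoef (k + i.val) hjt
      have hv0 : v (k + i.val) = 0 := hvtrunc _ (by omega)
      rw [hv0, zero_dotProduct, zero_add, cf_dot i b] at this
      exact this

/-- `PosSemidef` is preserved by nonnegative real scaling. -/
lemma posSemidef_smul_nonneg {α : Type*} [Fintype α] {M : Matrix α α ℝ}
    (hM : M.PosSemidef) {δ : ℝ} (hδ : 0 ≤ δ) : (δ • M).PosSemidef := by
  constructor
  · have h1 := hM.1
    unfold Matrix.IsHermitian at *
    rw [Matrix.conjTranspose_smul, h1]
    congr 1
  · intro x
    exact (hM.smul hδ).2 x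

/-- The determinant of the Gram matrix of `Mx + δ • Md` is a polynomial in `δ`. -/
lemma exists_poly_det_col {α β : Type*} [Fintype α] [Fintype β] [DecidableEq α] [DecidableEq β]
    (Mx Md : Matrix α β ℝ) (hMd : ((Md)ᵀ * Md).det ≠ 0) :
    ∃ p : Polynomial ℝ, p ≠ 0 ∧
      ∀ δ : ℝ, p.eval δ = ((Mx + δ • Md)ᵀ * (Mx + δ • Md)).det := by
  classical
  set PM : Matrix α β (Polynomial ℝ) :=
    Mx.map Polynomial.C + Md.map (fun a => Polynomial.C a * Polynomial.X) with hPM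
  set p : Polynomial ℝ := (PMᵀ * PM).det with hp
  have heval : ∀ δ : ℝ, p.eval δ = ((Mx + δ • Md)ᵀ * (Mx + δ • Md)).det := by
    intro δ
    have hmap : PM.map (Polynomial.evalRingHom δ) = Mx + δ • Md := by
      ext i j
      simp only [hPM, Matrix.map_apply, Matrix.add_apply, Matrix.smul_apply,
        Polynomial.coe_evalRingHom, Polynomial.eval_add, Polynomial.eval_mul,
        Polynomial.eval_C, Polynomial.eval_X, smul_eq_mul]
      ring
    have h1 : p.eval δ = ((PMᵀ * PM).map (Polynomial.evalRingHom δ)).det := by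
      rw [hp]
      have h2 := (Polynomial.evalRingHom δ).map_det (PMᵀ * PM)
      rw [RingHom.mapMatrix_apply] at h2
      rw [← h2]
      simp [Polynomial.coe_evalRingHom]
    rw [h1, Matrix.map_mul (f := Polynomial.evalRingHom δ),
      Matrix.transpose_map (f := ⇑(Polynomial.evalRingHom δ)) (M := PM), hmap]
  -- nonvanishing: find a witness δ₀
  have hcont : Continuous fun s : ℝ => ((Md + s • Mx)ᵀ * (Md + s • Mx)).det := by
    have hA : Continuous fun s : ℝ => Md + s • Mx := by
      apply Continuous.add continuous_const
      exact (continuous_id.smul continuous_const : Continuous fun s : ℝ => s • Mx)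
    exact (hA.matrix_transpose.matrix_mul hA).matrix_det
  have h0 : ((Md + (0:ℝ) • Mx)ᵀ * (Md + (0:ℝ) • Mx)).det ≠ 0 := by
    simpa using hMd
  have hev : ∀ᶠ s in nhdsWithin (0:ℝ) {0}ᶜ,
      ((Md + s • Mx)ᵀ * (Md + s • Mx)).det ≠ 0 := by
    have : ∀ᶠ s in nhds (0:ℝ), ((Md + s • Mx)ᵀ * (Md + s • Mx)).det ≠ 0 :=
      (hcont.continuousAt).eventually_ne h0
    exact nhdsWithin_le_nhds this
  obtain ⟨s₀, hs₀det, hs₀⟩ : ∃ s₀ : ℝ, ((Md + s₀ • Mx)ᵀ * (Md + s₀ • Mx)).det ≠ 0 ∧ s₀ ≠ 0 := by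
    have := (hev.and (eventually_mem_nhdsWithin (a := (0:ℝ)) (s := {0}ᶜ))).exists
    obtain ⟨s₀, h1, h2⟩ := this
    exact ⟨s₀, h1, h2⟩
  refine ⟨p, ?_, heval⟩
  intro hp0
  have hδ₀ := heval s₀⁻¹
  rw [hp0] at hδ₀
  simp only [Polynomial.eval_zero] at hδ₀
  have hkey : Mx + s₀⁻¹ • Md = s₀⁻¹ • (Md + s₀ • Mx) := by
    rw [smul_add, smul_smul, inv_mul_cancel₀ hs₀, one_smul, add_comm]
  rw [hkey] at hδ₀
  rw [Matrix.transpose_smul, Matrix.smul_mul, Matrix.mul_smul, smul_smul] at hδ₀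
  rw [Matrix.det_smul] at hδ₀
  have : (s₀⁻¹ * s₀⁻¹) ^ Fintype.card β ≠ 0 :=
    pow_ne_zero _ (mul_ne_zero (inv_ne_zero hs₀) (inv_ne_zero hs₀))
  rcases mul_eq_zero.mp hδ₀.symm with h | h
  · exact absurd h this
  · exact absurd h hs₀det

/-- Row version. -/
lemma exists_poly_det_row {α β : Type*} [Fintype α] [Fintype β] [DecidableEq α] [DecidableEq β]
    (Mx Md : Matrix α β ℝ) (hMd : (Md * Mdᵀ).det ≠ 0) :
    ∃ p : Polynomial ℝ, p ≠ 0 ∧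
      ∀ δ : ℝ, p.eval δ = ((Mx + δ • Md) * (Mx + δ • Md)ᵀ).det := by
  obtain ⟨p, hp0, hp⟩ := exists_poly_det_col Mxᵀ Mdᵀ (by
    rwa [Matrix.transpose_transpose])
  refine ⟨p, hp0, fun δ => ?_⟩
  have := hp δ
  rwa [← Matrix.transpose_smul, ← Matrix.transpose_add, Matrix.transpose_transpose] at this

/-- Approaching a point along a line, avoiding the zeros of a polynomial. -/
lemma mem_closure_of_line {ι : Type*} [Fintype ι] (x d : ι → ℝ) (A : Set (ι → ℝ))
    (p : Polynomial ℝ) (hp : p ≠ 0)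
    (hA : ∀ δ : ℝ, 0 < δ → p.eval δ ≠ 0 → x + δ • d ∈ A) :
    x ∈ closure A := by
  have hchoice : ∀ j : ℕ, ∃ δ : ℝ, δ ∈ Set.Ioo (0:ℝ) (1/(j+1)) ∧ p.eval δ ≠ 0 := by
    intro j
    have hIoo : (Set.Ioo (0:ℝ) (1/(j+1))).Infinite :=
      Set.infinite_coe_iff.mp (Set.Ioo.infinite (by positivity))
    have hfin : {x : ℝ | p.IsRoot x}.Finite := p.finite_setOf_isRoot hp
    obtain ⟨δ, hδ⟩ := (hIoo.diff hfin).nonempty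
    exact ⟨δ, hδ.1, hδ.2⟩
  choose δs hδs hne using hchoice
  have htend : Filter.Tendsto (fun j : ℕ => x + δs j • d) Filter.atTop (nhds x) := by
    have h1 : Filter.Tendsto δs Filter.atTop (nhds 0) := by
      apply squeeze_zero (fun j => le_of_lt (hδs j).1) (fun j => le_of_lt (hδs j).2)
      exact tendsto_one_div_add_atTop_nhds_zero_nat
    have h2 : Filter.Tendsto (fun j : ℕ => x + δs j • d) Filter.atTop (nhds (x + (0:ℝ) • d)) := by
      apply Filter.Tendsto.add tendsto_const_nhds
      exact h1.smul tendsto_const_nhds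
    simpa using h2
  exact mem_closure_of_tendsto htend (Filter.Eventually.of_forall fun j =>
    hA (δs j) (hδs j).1 (hne j))

lemma mulVec_single_old {m n R : Type*} [Fintype n] [DecidableEq n] [NonUnitalNonAssocSemiring R]
    (M : Matrix m n R) (j : n) (x : R) : M *ᵥ Pi.single j x = fun i => M i j * x := by
  funext i; simp [mulVec, dotProduct, Pi.single_apply]

namespace PHaux

variable {ℓ n m : ℕ}

/-- Build a coordinate vector from the four matrix blocks. -/
def tup (A : Matrix (Fin ℓ) (Fin n) ℝ) (K : Matrix (Fin ℓ) (Fin ℓ) ℝ)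
    (N : Matrix (Fin ℓ) (Fin n) ℝ) (Cm : Matrix (Fin ℓ) (Fin m) ℝ) : IdxH ℓ n m → ℝ
  | Sum.inl (i, j) => A i j
  | Sum.inr (Sum.inl (i, j)) => K i j
  | Sum.inr (Sum.inr (Sum.inl (i, j))) => N i j
  | Sum.inr (Sum.inr (Sum.inr (i, j))) => Cm i j

lemma mE_line (x : IdxH ℓ n m → ℝ) (δ : ℝ) (A K N Cm) :
    mE (x + δ • tup A K N Cm) = mE x + δ • A := by
  ext i j; simp [mE, tup]

lemma mJ_line (x : IdxH ℓ n m → ℝ) (δ : ℝ) (A K N Cm) :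
    mJ (x + δ • tup A K N Cm) = mJ x + δ • K := by
  ext i j; simp [mJ, tup]

lemma mQ_line (x : IdxH ℓ n m → ℝ) (δ : ℝ) (A K N Cm) :
    mQ (x + δ • tup A K N Cm) = mQ x + δ • N := by
  ext i j; simp [mQ, tup]

lemma mB_line (x : IdxH ℓ n m → ℝ) (δ : ℝ) (A K N Cm) :
    mB (x + δ • tup A K N Cm) = mB x + δ • Cm := by
  ext i j; simp [mB, tup]

lemma conjT_eq_transpose {a b : Type*} (M : Matrix a b ℝ) : Mᴴ = Mᵀ := by
  ext i j; simp [Matrix.conjTranspose_apply]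

/-- Perturbing `E` in direction `Q + F₁` (with `F₁ᵀQ = 0`) and `B` freely stays in `Σ^H`. -/
lemma sigma_line_EB (x : IdxH ℓ n m → ℝ) (hx : x ∈ SigmaH ℓ n m)
    (F₁ : Matrix (Fin ℓ) (Fin n) ℝ) (hF₁ : F₁ᵀ * mQ x = 0)
    (Cm : Matrix (Fin ℓ) (Fin m) ℝ) (δ : ℝ) (hδ : 0 ≤ δ) :
    x + δ • tup (mQ x + F₁) 0 0 Cm ∈ SigmaH ℓ n m := by
  obtain ⟨hJ, hsym, hpsd⟩ := hx
  have hQF : (mQ x)ᵀ * F₁ = 0 := by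
    have := congrArg Matrix.transpose hF₁
    rwa [Matrix.transpose_mul, Matrix.transpose_transpose, Matrix.transpose_zero] at this
  refine ⟨?_, ?_, ?_⟩
  · rw [mJ_line, smul_zero, add_zero]
    exact hJ
  · rw [mE_line, mQ_line, smul_zero, add_zero, Matrix.transpose_add,
      Matrix.transpose_smul, Matrix.add_mul, Matrix.smul_mul, Matrix.mul_add,
      Matrix.mul_smul, Matrix.transpose_add, Matrix.add_mul, hF₁, add_zero,
      Matrix.mul_add, hQF, add_zero]
    rw [hsym]
  · rw [mE_line, mQ_line, smul_zero, add_zero, Matrix.transpose_add,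
      Matrix.transpose_smul, Matrix.add_mul, Matrix.smul_mul, Matrix.transpose_add,
      Matrix.add_mul, hF₁, add_zero]
    refine Matrix.PosSemidef.add hpsd (posSemidef_smul_nonneg ?_ hδ)
    have := Matrix.posSemidef_conjTranspose_mul_self (mQ x)
    rwa [conjT_eq_transpose] at this

/-- Perturbing `J` skew and `Q` orthogonally to `E` stays in `Σ^H`. -/
lemma sigma_line_JQ (x : IdxH ℓ n m → ℝ) (hx : x ∈ SigmaH ℓ n m)
    (K : Matrix (Fin ℓ) (Fin ℓ) ℝ) (hK : Kᵀ = -K)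
    (N : Matrix (Fin ℓ) (Fin n) ℝ) (hEN : (mE x)ᵀ * N = 0) (hNE : Nᵀ * mE x = 0)
    (δ : ℝ) :
    x + δ • tup 0 K N 0 ∈ SigmaH ℓ n m := by
  obtain ⟨hJ, hsym, hpsd⟩ := hx
  refine ⟨?_, ?_, ?_⟩
  · rw [mJ_line, Matrix.transpose_add, Matrix.transpose_smul, hJ, hK, smul_neg, neg_add]
  · rw [mE_line, mQ_line, smul_zero, add_zero, Matrix.mul_add, Matrix.mul_smul, hEN,
      smul_zero, add_zero, Matrix.transpose_add, Matrix.transpose_smul, Matrix.add_mul,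
      Matrix.smul_mul, hNE, smul_zero, add_zero]
    exact hsym
  · rw [mE_line, mQ_line, smul_zero, add_zero, Matrix.mul_add, Matrix.mul_smul, hEN,
      smul_zero, add_zero]
    exact hpsd

lemma sigma_nonempty : (0 : IdxH ℓ n m → ℝ) ∈ SigmaH ℓ n m := by
  have hE : mE (0 : IdxH ℓ n m → ℝ) = 0 := by ext i j; simp [mE]
  have hJ : mJ (0 : IdxH ℓ n m → ℝ) = 0 := by ext i j; simp [mJ]
  have hQ : mQ (0 : IdxH ℓ n m → ℝ) = 0 := by ext i j; simp [mQ]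
  refine ⟨?_, ?_, ?_⟩
  · rw [hJ]; simp
  · rw [hE, hQ]
  · rw [hE]
    simp only [Matrix.transpose_zero, Matrix.zero_mul]
    exact Matrix.PosSemidef.zero

/- MvPolynomial coordinate matrices -/

noncomputable def PE (ℓ n m : ℕ) : Matrix (Fin ℓ) (Fin n) (MvPolynomial (IdxH ℓ n m) ℝ) :=
  Matrix.of fun i j => MvPolynomial.X (Sum.inl (i, j))

noncomputable def PJ (ℓ n m : ℕ) : Matrix (Fin ℓ) (Fin ℓ) (MvPolynomial (IdxH ℓ n m) ℝ) :=
  Matrix.of fun i j => MvPolynomial.X (Sum.inr (Sum.inl (i, j)))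

noncomputable def PQ (ℓ n m : ℕ) : Matrix (Fin ℓ) (Fin n) (MvPolynomial (IdxH ℓ n m) ℝ) :=
  Matrix.of fun i j => MvPolynomial.X (Sum.inr (Sum.inr (Sum.inl (i, j))))

noncomputable def PB (ℓ n m : ℕ) : Matrix (Fin ℓ) (Fin m) (MvPolynomial (IdxH ℓ n m) ℝ) :=
  Matrix.of fun i j => MvPolynomial.X (Sum.inr (Sum.inr (Sum.inr (i, j))))

lemma map_PE (x : IdxH ℓ n m → ℝ) : (PE ℓ n m).map (MvPolynomial.eval x) = mE x := by
  ext i j; simp [PE, mE]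

lemma map_PJ (x : IdxH ℓ n m → ℝ) : (PJ ℓ n m).map (MvPolynomial.eval x) = mJ x := by
  ext i j; simp [PJ, mJ]

lemma map_PQ (x : IdxH ℓ n m → ℝ) : (PQ ℓ n m).map (MvPolynomial.eval x) = mQ x := by
  ext i j; simp [PQ, mQ]

lemma map_PB (x : IdxH ℓ n m → ℝ) : (PB ℓ n m).map (MvPolynomial.eval x) = mB x := by
  ext i j; simp [PB, mB]

lemma fromColumns_map {R S : Type*} {a b c : Type*} (f : R → S)
    (A : Matrix a b R) (B : Matrix a c R) :
    (Matrix.fromCols A B).map f = Matrix.fromCols (A.map f) (B.map f) := by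
  ext i j
  cases j with
  | inl j => simp [Matrix.fromCols, Matrix.map_apply]
  | inr j => simp [Matrix.fromCols, Matrix.map_apply]

/-- Polynomial whose vanishing captures `rank [E B] < ℓ`. -/
noncomputable def P1 (ℓ n m : ℕ) : MvPolynomial (IdxH ℓ n m) ℝ :=
  (Matrix.fromCols (PE ℓ n m) (PB ℓ n m) *
    (Matrix.fromCols (PE ℓ n m) (PB ℓ n m))ᵀ).det

lemma eval_P1 (x : IdxH ℓ n m → ℝ) :
    MvPolynomial.eval x (P1 ℓ n m) =
      (Matrix.fromCols (mE x) (mB x) * (Matrix.fromCols (mE x) (mB x))ᵀ).det := by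
  classical
  have h2 := (MvPolynomial.eval x).map_det
    (Matrix.fromCols (PE ℓ n m) (PB ℓ n m) *
      (Matrix.fromCols (PE ℓ n m) (PB ℓ n m))ᵀ)
  rw [RingHom.mapMatrix_apply] at h2
  rw [P1, h2, Matrix.map_mul (f := MvPolynomial.eval x),
    Matrix.transpose_map (f := ⇑(MvPolynomial.eval x)), fromColumns_map, map_PE, map_PB]

/-- The `ℓ × (n+1+m)` matrix `[E, (JQ)_j, B]`. -/
noncomputable def Hreal (x : IdxH ℓ n m → ℝ) (j : Fin n) :
    Matrix (Fin ℓ) (Fin n ⊕ (Fin 1 ⊕ Fin m)) ℝ :=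
  Matrix.fromCols (mE x)
    (Matrix.fromCols (Matrix.of fun i (_ : Fin 1) => (mJ x * mQ x) i j) (mB x))

noncomputable def Hpoly (ℓ n m : ℕ) (j : Fin n) :
    Matrix (Fin ℓ) (Fin n ⊕ (Fin 1 ⊕ Fin m)) (MvPolynomial (IdxH ℓ n m) ℝ) :=
  Matrix.fromCols (PE ℓ n m)
    (Matrix.fromCols (Matrix.of fun i (_ : Fin 1) => (PJ ℓ n m * PQ ℓ n m) i j)
      (PB ℓ n m))

/-- Polynomials whose common vanishing captures `rank [E, JQ, B] ≤ n+m`. -/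
noncomputable def P2 (ℓ n m : ℕ) (j : Fin n) : MvPolynomial (IdxH ℓ n m) ℝ :=
  ((Hpoly ℓ n m j)ᵀ * Hpoly ℓ n m j).det

lemma map_Hpoly (x : IdxH ℓ n m → ℝ) (j : Fin n) :
    (Hpoly ℓ n m j).map (MvPolynomial.eval x) = Hreal x j := by
  have hJQ : (PJ ℓ n m * PQ ℓ n m).map (MvPolynomial.eval x) = mJ x * mQ x := by
    rw [Matrix.map_mul (f := MvPolynomial.eval x), map_PJ, map_PQ]
  have hcol : (Matrix.of fun i (_ : Fin 1) => (PJ ℓ n m * PQ ℓ n m) i j).map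
      (MvPolynomial.eval x) = Matrix.of fun i (_ : Fin 1) => (mJ x * mQ x) i j := by
    ext i q
    have := congrFun (congrFun hJQ i) j
    simpa [Matrix.map_apply] using this
  rw [Hpoly, Hreal, fromColumns_map, fromColumns_map, map_PE, map_PB, hcol]

lemma eval_P2 (x : IdxH ℓ n m → ℝ) (j : Fin n) :
    MvPolynomial.eval x (P2 ℓ n m j) = ((Hreal x j)ᵀ * Hreal x j).det := by
  classical
  have h2 := (MvPolynomial.eval x).map_det ((Hpoly ℓ n m j)ᵀ * Hpoly ℓ n m j)
  rw [RingHom.mapMatrix_apply] at h2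
  rw [P2, h2, Matrix.map_mul (f := MvPolynomial.eval x),
    Matrix.transpose_map (f := ⇑(MvPolynomial.eval x)), map_Hpoly]

end PHaux

namespace PHaux

variable {ℓ n m : ℕ}

/-- If `det([E B][E B]ᵀ) ≠ 0` then the freely-initializable rank condition holds. -/
lemma rank_eq_of_detP1_ne (x : IdxH ℓ n m → ℝ)
    (hdet : MvPolynomial.eval x (P1 ℓ n m) ≠ 0) :
    (Matrix.fromCols (mE x) (mB x)).rank =
      (Matrix.fromCols (mE x) (Matrix.fromCols (mJ x * mQ x) (mB x))).rank := by
  rw [eval_P1] at hdet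
  have hrow := (det_row_gram_ne_zero_iff _).mp hdet
  have hrowG : ∀ u : Fin ℓ → ℝ,
      u ᵥ* Matrix.fromCols (mE x) (Matrix.fromCols (mJ x * mQ x) (mB x)) = 0 →
      u = 0 := by
    intro u hu
    rw [Matrix.vecMul_fromCols] at hu
    have hE : u ᵥ* mE x = 0 := by funext j; exact congrFun hu (Sum.inl j)
    have h2 : u ᵥ* Matrix.fromCols (mJ x * mQ x) (mB x) = 0 := by
      funext j; exact congrFun hu (Sum.inr j)
    rw [Matrix.vecMul_fromCols] at h2
    have hB : u ᵥ* mB x = 0 := by funext j; exact congrFun h2 (Sum.inr j)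
    apply hrow
    rw [Matrix.vecMul_fromCols]
    funext s
    cases s with
    | inl j => exact congrFun hE j
    | inr j => exact congrFun hB j
  rw [rank_eq_card_height_of_inj _ hrow, rank_eq_card_height_of_inj _ hrowG]

/-- If some `det(H_jᵀ H_j) ≠ 0` then the rank condition fails. -/
lemma rank_ne_of_detP2_ne (x : IdxH ℓ n m → ℝ) (j : Fin n)
    (hdet : MvPolynomial.eval x (P2 ℓ n m j) ≠ 0) :
    (Matrix.fromCols (mE x) (mB x)).rank ≠
      (Matrix.fromCols (mE x) (Matrix.fromCols (mJ x * mQ x) (mB x))).rank := by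
  rw [eval_P2] at hdet
  have hinj := (det_col_gram_ne_zero_iff _).mp hdet
  have hH : (Hreal x j).rank = n + (1 + m) := by
    rw [rank_eq_card_width_of_inj _ hinj]
    simp
  have hle' : (Hreal x j).rank ≤
      (Matrix.fromCols (mE x) (Matrix.fromCols (mJ x * mQ x) (mB x))).rank := by
    apply rank_le_of_range_subset
    intro z
    refine ⟨Sum.elim (fun i => z (Sum.inl i))
      (Sum.elim (Pi.single j (z (Sum.inr (Sum.inl 0)))) (fun i => z (Sum.inr (Sum.inr i)))),
      ?_⟩
    have hz : z = Sum.elim (fun i => z (Sum.inl i))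
        (Sum.elim (fun q => z (Sum.inr (Sum.inl q))) (fun i => z (Sum.inr (Sum.inr i)))) := by
      funext s
      rcases s with i | q | i <;> rfl
    have hR : Hreal x j *ᵥ z = mE x *ᵥ (fun i => z (Sum.inl i)) +
        ((Matrix.of fun i (_ : Fin 1) => (mJ x * mQ x) i j) *ᵥ
          (fun q => z (Sum.inr (Sum.inl q))) +
         mB x *ᵥ (fun i => z (Sum.inr (Sum.inr i)))) := by
      conv_lhs => rw [hz]
      rw [Hreal, Matrix.fromCols_mulVec_sumElim, Matrix.fromCols_mulVec_sumElim]
    rw [Matrix.fromCols_mulVec_sumElim, Matrix.fromCols_mulVec_sumElim, hR]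
    congr 1
    congr 1
    rw [mulVec_single_old]
    funext i
    simp only [Matrix.mulVec, dotProduct, Matrix.of_apply]
    rw [Fin.sum_univ_one]
  have hrankEB : (Matrix.fromCols (mE x) (mB x)).rank ≤ n + m := by
    have := Matrix.rank_le_card_width (Matrix.fromCols (mE x) (mB x))
    simpa using this
  intro heq
  rw [heq] at hrankEB
  omega

lemma isAlgebraic_W1 : IsAlgebraicSet {x : IdxH ℓ n m → ℝ | MvPolynomial.eval x (P1 ℓ n m) = 0} := by
  refine ⟨1, fun _ => P1 ℓ n m, ?_⟩
  ext x
  simp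

lemma isAlgebraic_W2 :
    IsAlgebraicSet {x : IdxH ℓ n m → ℝ | ∀ j : Fin n, MvPolynomial.eval x (P2 ℓ n m j) = 0} :=
  ⟨n, P2 ℓ n m, rfl⟩

lemma isClosed_of_isAlgebraicSet {ι : Type} [Fintype ι] {W : Set (ι → ℝ)}
    (h : IsAlgebraicSet W) : IsClosed W := by
  obtain ⟨k, p, rfl⟩ := h
  have he : {x : ι → ℝ | ∀ i, MvPolynomial.eval x (p i) = 0}
      = ⋂ i, {x : ι → ℝ | MvPolynomial.eval x (p i) = 0} := by
    ext y; simp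
  rw [he]
  exact isClosed_iInter fun i =>
    isClosed_eq (MvPolynomial.continuous_eval (p i)) continuous_const

lemma not_both {ι : Type} [Fintype ι] {S V : Set (ι → ℝ)} (hV : V.Nonempty)
    (h1 : RelGeneric S V) (h2 : RelGeneric Sᶜ V) : False := by
  obtain ⟨W1, _, hsub1, hdens1⟩ := h1
  obtain ⟨W2, halg2, hsub2, hdens2⟩ := h2
  have hVW2 : V ⊆ W2 := by
    intro x hx
    have hx' := hdens1 hx
    have hsubset : W1ᶜ ∩ V ⊆ W2 := by
      rintro y ⟨hy1, hy2⟩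
      by_cases hyS : y ∈ S
      · exact (hsub2 ⟨by simpa using hyS, hy2⟩).1
      · exact absurd (hsub1 ⟨hyS, hy2⟩).1 hy1
    have hcl : closure (W1ᶜ ∩ V) ⊆ W2 :=
      (isClosed_of_isAlgebraicSet halg2).closure_subset_iff.mpr hsubset
    exact hcl hx'
  obtain ⟨x0, hx0⟩ := hV
  have hmem := hdens2 hx0
  have hempty : W2ᶜ ∩ V = ∅ := by
    ext y
    simp only [Set.mem_inter_iff, Set.mem_empty_iff_false, iff_false, not_and,
      Set.mem_compl_iff]
    intro hy1 hy2
    exact hy1 (hVW2 hy2)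
  rw [hempty, closure_empty] at hmem
  exact hmem

end PHaux

namespace PHaux

variable {ℓ n m : ℕ}

lemma density_case1 (hln : ℓ ≤ n + m) :
    ∀ x ∈ SigmaH ℓ n m,
      x ∈ closure ({y : IdxH ℓ n m → ℝ | MvPolynomial.eval y (P1 ℓ n m) = 0}ᶜ ∩
        SigmaH ℓ n m) := by
  intro x hx
  obtain ⟨F₁, C, hFQ, hQF, hrow, _⟩ := key_construction ℓ n m (mQ x)
  set Md := Matrix.fromCols (mQ x + F₁) C with hMd
  have hdetMd : (Md * Mdᵀ).det ≠ 0 := by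
    apply (det_row_gram_ne_zero_iff Md).mpr
    intro u hu
    rw [hMd, Matrix.vecMul_fromCols] at hu
    exact hrow hln u (funext fun j => congrFun hu (Sum.inl j))
      (funext fun j => congrFun hu (Sum.inr j))
  obtain ⟨p, hp0, hp⟩ := exists_poly_det_row (Matrix.fromCols (mE x) (mB x)) Md hdetMd
  apply mem_closure_of_line x (tup (mQ x + F₁) 0 0 C) _ p hp0
  intro δ hδ hne
  refine ⟨?_, sigma_line_EB x hx F₁ hFQ C δ hδ.le⟩
  simp only [Set.mem_compl_iff, Set.mem_setOf_eq]
  rw [eval_P1]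
  have hfc : Matrix.fromCols (mE (x + δ • tup (mQ x + F₁) 0 0 C))
      (mB (x + δ • tup (mQ x + F₁) 0 0 C))
      = Matrix.fromCols (mE x) (mB x) + δ • Md := by
    rw [mE_line, mB_line, hMd]
    ext i s
    cases s with
    | inl j => simp [Matrix.fromCols, mul_add]
    | inr j => simp [Matrix.fromCols, mul_add]
  rw [hfc, ← hp δ]
  exact hne

lemma density_case2_step1 (hml : n + m ≤ ℓ) :
    ∀ x ∈ SigmaH ℓ n m,
      x ∈ closure {y : IdxH ℓ n m → ℝ | y ∈ SigmaH ℓ n m ∧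
        ((Matrix.fromCols (mE y) (mB y))ᵀ * Matrix.fromCols (mE y) (mB y)).det ≠ 0} := by
  intro x hx
  obtain ⟨F₁, C, hFQ, hQF, _, hcol⟩ := key_construction ℓ n m (mQ x)
  set Md := Matrix.fromCols (mQ x + F₁) C with hMd
  have hdetMd : (Mdᵀ * Md).det ≠ 0 := by
    apply (det_col_gram_ne_zero_iff Md).mpr
    intro z hz
    have hzd : z = Sum.elim (fun i => z (Sum.inl i)) (fun i => z (Sum.inr i)) := by
      funext s; rcases s with i | i <;> rfl
    rw [hMd] at hz
    rw [hzd, Matrix.fromCols_mulVec_sumElim] at hz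
    obtain ⟨h1, h2⟩ := hcol hml (fun i => z (Sum.inl i)) (fun i => z (Sum.inr i)) hz
    funext s
    rcases s with i | i
    · exact congrFun h1 i
    · exact congrFun h2 i
  obtain ⟨p, hp0, hp⟩ := exists_poly_det_col (Matrix.fromCols (mE x) (mB x)) Md hdetMd
  apply mem_closure_of_line x (tup (mQ x + F₁) 0 0 C) _ p hp0
  intro δ hδ hne
  refine ⟨sigma_line_EB x hx F₁ hFQ C δ hδ.le, ?_⟩
  have hfc : Matrix.fromCols (mE (x + δ • tup (mQ x + F₁) 0 0 C))
      (mB (x + δ • tup (mQ x + F₁) 0 0 C))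
      = Matrix.fromCols (mE x) (mB x) + δ • Md := by
    rw [mE_line, mB_line, hMd]
    ext i s
    cases s with
    | inl j => simp [Matrix.fromCols, mul_add]
    | inr j => simp [Matrix.fromCols, mul_add]
  rw [hfc, ← hp δ]
  exact hne

lemma density_case2_step2 (hgt : n + m < ℓ) (hn : 1 ≤ n) (hm : 1 ≤ m) :
    ∀ y : IdxH ℓ n m → ℝ, y ∈ SigmaH ℓ n m →
      ((Matrix.fromCols (mE y) (mB y))ᵀ * Matrix.fromCols (mE y) (mB y)).det ≠ 0 →
      y ∈ closure ({x : IdxH ℓ n m → ℝ |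
          ∀ j : Fin n, MvPolynomial.eval x (P2 ℓ n m j) = 0}ᶜ ∩ SigmaH ℓ n m) := by
  intro y hy hydet
  -- a nonzero vector u orthogonal to the columns of E and B
  obtain ⟨u, hu0, huEB⟩ : ∃ u : Fin ℓ → ℝ, u ≠ 0 ∧
      (Matrix.fromCols (mE y) (mB y))ᵀ *ᵥ u = 0 := by
    set M := (Matrix.fromCols (mE y) (mB y))ᵀ with hM
    have hrn := LinearMap.finrank_range_add_finrank_ker M.mulVecLin
    rw [Module.finrank_fintype_fun_eq_card, Fintype.card_fin] at hrn
    have hranle : Module.finrank ℝ (LinearMap.range M.mulVecLin) ≤ n + m := by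
      have h1 := Submodule.finrank_le (LinearMap.range M.mulVecLin)
      rwa [Module.finrank_fintype_fun_eq_card, Fintype.card_sum,
        Fintype.card_fin, Fintype.card_fin] at h1
    have hker : LinearMap.ker M.mulVecLin ≠ ⊥ := by
      intro hbot
      rw [hbot, finrank_bot] at hrn
      omega
    obtain ⟨u, huk, hu0⟩ := Submodule.ne_bot_iff _ |>.mp hker
    exact ⟨u, hu0, huk⟩
  have huE : u ᵥ* mE y = 0 := by
    rw [Matrix.mulVec_transpose, Matrix.vecMul_fromCols] at huEB
    funext j; exact congrFun huEB (Sum.inl j)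
  have huB : u ᵥ* mB y = 0 := by
    rw [Matrix.mulVec_transpose, Matrix.vecMul_fromCols] at huEB
    funext j; exact congrFun huEB (Sum.inr j)
  -- a nonzero vector w with Eᵀw = 0 and u ⬝ w = 0
  obtain ⟨w, hw0, hEw, huw⟩ : ∃ w : Fin ℓ → ℝ, w ≠ 0 ∧ (mE y)ᵀ *ᵥ w = 0 ∧ u ⬝ᵥ w = 0 := by
    set R : Matrix (Fin 1) (Fin ℓ) ℝ := Matrix.of fun _ i => u i with hR
    have h1 := LinearMap.finrank_range_add_finrank_ker (mE y)ᵀ.mulVecLin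
    rw [Module.finrank_fintype_fun_eq_card, Fintype.card_fin] at h1
    have h1le : Module.finrank ℝ (LinearMap.range (mE y)ᵀ.mulVecLin) ≤ n := by
      have := Submodule.finrank_le (LinearMap.range (mE y)ᵀ.mulVecLin)
      rwa [Module.finrank_fintype_fun_eq_card, Fintype.card_fin] at this
    have h2 := LinearMap.finrank_range_add_finrank_ker R.mulVecLin
    rw [Module.finrank_fintype_fun_eq_card, Fintype.card_fin] at h2
    have h2le : Module.finrank ℝ (LinearMap.range R.mulVecLin) ≤ 1 := by
      have := Submodule.finrank_le (LinearMap.range R.mulVecLin)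
      rwa [Module.finrank_fintype_fun_eq_card, Fintype.card_fin] at this
    have hsup := Submodule.finrank_sup_add_finrank_inf_eq
      (LinearMap.ker (mE y)ᵀ.mulVecLin) (LinearMap.ker R.mulVecLin)
    have hsuple : Module.finrank ℝ
        ↥(LinearMap.ker (mE y)ᵀ.mulVecLin ⊔ LinearMap.ker R.mulVecLin) ≤ ℓ := by
      have := Submodule.finrank_le (LinearMap.ker (mE y)ᵀ.mulVecLin ⊔ LinearMap.ker R.mulVecLin)
      rwa [Module.finrank_fintype_fun_eq_card, Fintype.card_fin] at this
    have hpos : LinearMap.ker (mE y)ᵀ.mulVecLin ⊓ LinearMap.ker R.mulVecLin ≠ ⊥ := by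
      intro hbot
      rw [hbot, finrank_bot] at hsup
      omega
    obtain ⟨w, hwk, hw0⟩ := Submodule.ne_bot_iff _ |>.mp hpos
    obtain ⟨hwk1, hwk2⟩ := Submodule.mem_inf.mp hwk
    refine ⟨w, hw0, hwk1, ?_⟩
    have := congrFun (hwk2 : R *ᵥ w = 0) 0
    simpa [hR, Matrix.mulVec, dotProduct] using this
  -- the perturbation direction
  set j₀ : Fin n := ⟨0, hn⟩ with hj₀
  set K : Matrix (Fin ℓ) (Fin ℓ) ℝ := vecMulVec u w - vecMulVec w u with hK
  set N : Matrix (Fin ℓ) (Fin n) ℝ := vecMulVec w (Pi.single j₀ 1) with hN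
  have hKskew : Kᵀ = -K := by
    rw [hK, Matrix.transpose_sub, vmv_transpose, vmv_transpose]
    exact (neg_sub _ _).symm
  have hEN : (mE y)ᵀ * N = 0 := by
    rw [hN, mul_vmv, hEw, vmv_zero_left]
  have hwE : w ᵥ* mE y = 0 := by
    rw [← Matrix.mulVec_transpose]; exact hEw
  have hNE : Nᵀ * mE y = 0 := by
    rw [hN, vmv_transpose, vmv_mul, hwE, vmv_zero_right]
  -- the polynomial
  set qv : Fin ℓ → ℝ := fun i => mQ y i j₀ with hqv
  set c0 : ℝ := u ⬝ᵥ (mJ y *ᵥ qv) with hc0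
  set c1 : ℝ := u ⬝ᵥ (mJ y *ᵥ w) + (u ⬝ᵥ u) * (w ⬝ᵥ qv) with hc1
  set c2 : ℝ := (u ⬝ᵥ u) * (w ⬝ᵥ w) with hc2def
  have hc2 : c2 ≠ 0 := mul_ne_zero
    (fun h => hu0 (dotProduct_self_eq_zero.mp h))
    (fun h => hw0 (dotProduct_self_eq_zero.mp h))
  set p : Polynomial ℝ := Polynomial.C c0 + Polynomial.C c1 * Polynomial.X +
    Polynomial.C c2 * Polynomial.X ^ 2 with hpdef
  have hp0 : p ≠ 0 := by
    intro h
    have := congrArg (fun q : Polynomial ℝ => q.coeff 2) h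
    simp [hpdef, Polynomial.coeff_C] at this
    exact hc2 this
  have hKz : ∀ z : Fin ℓ → ℝ, u ⬝ᵥ (K *ᵥ z) = (u ⬝ᵥ u) * (w ⬝ᵥ z) := by
    intro z
    rw [hK, Matrix.sub_mulVec, vmv_mulVec, vmv_mulVec, dotProduct_sub,
      dotProduct_smul, dotProduct_smul, smul_eq_mul, smul_eq_mul, huw]
    ring
  have hkey : ∀ δ : ℝ, u ⬝ᵥ ((mJ y + δ • K) *ᵥ (qv + δ • w)) = p.eval δ := by
    intro δ
    rw [Matrix.add_mulVec, Matrix.mulVec_add, Matrix.mulVec_smul,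
      Matrix.smul_mulVec, Matrix.mulVec_add, Matrix.mulVec_smul]
    simp only [dotProduct_add, dotProduct_smul, smul_eq_mul, hKz]
    simp only [hpdef, Polynomial.eval_add, Polynomial.eval_mul, Polynomial.eval_C,
      Polynomial.eval_X, Polynomial.eval_pow]
    rw [hc0, hc1, hc2def]
    ring
  -- approach along the line
  apply mem_closure_of_line y (tup 0 K N 0) _ p hp0
  intro δ hδ hne
  have hxs := sigma_line_JQ y hy K hKskew N hEN hNE δ
  set x' := y + δ • tup 0 K N 0 with hx'
  have hE' : mE x' = mE y := by rw [hx', mE_line, smul_zero, add_zero]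
  have hB' : mB x' = mB y := by rw [hx', mB_line, smul_zero, add_zero]
  have hQ' : mQ x' = mQ y + δ • N := by rw [hx', mQ_line]
  have hJ' : mJ x' = mJ y + δ • K := by rw [hx', mJ_line]
  have hQcol : (mQ y + δ • N) *ᵥ Pi.single j₀ 1 = qv + δ • w := by
    rw [mulVec_single_old]
    funext i
    simp only [Matrix.add_apply, Matrix.smul_apply, hN, vecMulVec, Matrix.of_apply,
      Pi.add_apply, Pi.smul_apply, smul_eq_mul, hqv]
    rw [Pi.single_eq_same]
    ring
  have hcolv : (mJ x' * mQ x') *ᵥ Pi.single j₀ 1 = (mJ y + δ • K) *ᵥ (qv + δ • w) := by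
    rw [← Matrix.mulVec_mulVec, hJ', hQ', hQcol]
  have hudot : u ⬝ᵥ ((mJ x' * mQ x') *ᵥ Pi.single j₀ 1) = p.eval δ := by
    rw [hcolv]; exact hkey δ
  refine ⟨?_, hxs⟩
  simp only [Set.mem_compl_iff, Set.mem_setOf_eq]
  intro hall
  have hdj := hall j₀
  rw [eval_P2] at hdj
  -- but the determinant is nonzero:
  have hdet' : ((Hreal x' j₀)ᵀ * Hreal x' j₀).det ≠ 0 := by
    apply (det_col_gram_ne_zero_iff _).mpr
    intro z hz
    have hzd : z = Sum.elim (fun i => z (Sum.inl i))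
        (Sum.elim (fun q => z (Sum.inr (Sum.inl q))) (fun i => z (Sum.inr (Sum.inr i)))) := by
      funext s; rcases s with i | q | i <;> rfl
    rw [Hreal] at hz
    rw [hzd, Matrix.fromCols_mulVec_sumElim, Matrix.fromCols_mulVec_sumElim] at hz
    -- the middle term
    have hmid : (Matrix.of fun i (_ : Fin 1) => (mJ x' * mQ x') i j₀) *ᵥ
        (fun q => z (Sum.inr (Sum.inl q)))
        = z (Sum.inr (Sum.inl 0)) • ((mJ x' * mQ x') *ᵥ Pi.single j₀ 1) := by
      rw [mulVec_single_old]
      funext i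
      simp only [Matrix.mulVec, dotProduct, Matrix.of_apply, Pi.smul_apply,
        smul_eq_mul]
      rw [Fin.sum_univ_one]
      ring
    rw [hmid] at hz
    have hdotu := congrArg (fun v => u ⬝ᵥ v) hz
    simp only [dotProduct_add, dotProduct_zero, dotProduct_smul,
      smul_eq_mul] at hdotu
    rw [hE', hB'] at hdotu
    rw [Matrix.dotProduct_mulVec u (mE y), huE, Matrix.dotProduct_mulVec u (mB y), huB,
      zero_dotProduct, zero_dotProduct, hudot] at hdotu
    have hz2 : z (Sum.inr (Sum.inl 0)) = 0 := by
      rcases mul_eq_zero.mp (by linarith [hdotu] : z (Sum.inr (Sum.inl 0)) * p.eval δ = 0)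
        with h | h
      · exact h
      · exact absurd h hne
    rw [hz2, zero_smul, zero_add] at hz
    rw [hE', hB'] at hz
    have hEB : Matrix.fromCols (mE y) (mB y) *ᵥ
        Sum.elim (fun i => z (Sum.inl i)) (fun i => z (Sum.inr (Sum.inr i))) = 0 := by
      rw [Matrix.fromCols_mulVec_sumElim]
      exact hz
    have hzero := (det_col_gram_ne_zero_iff _).mp hydet _ hEB
    funext s
    rcases s with i | q | i
    · exact congrFun hzero (Sum.inl i)
    · have hq : q = 0 := Subsingleton.elim _ _
      rw [hq]; exact hz2
    · exact congrFun hzero (Sum.inr i)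
  exact hdet' hdj

end PHaux

/-- the set of freely initializable pH descriptor systems,
`{(E,J,Q,B) ∈ Σ^H : rank [E, B] = rank [E, JQ, B]}`, is relative generic in
`Σ^H_{ℓ,n,m}` iff `ℓ ≤ n + m`; if `ℓ > n + m` then its complement is relative
generic in `Σ^H_{ℓ,n,m}`. -/
theorem freely_initializable_relGeneric_iff (ℓ n m : ℕ) (hℓ : 1 ≤ ℓ) (hn : 1 ≤ n) (hm : 1 ≤ m) :
    (RelGeneric
      {x ∈ SigmaH ℓ n m |
        (Matrix.fromCols (mE x) (mB x)).rank =
          (Matrix.fromCols (mE x) (Matrix.fromCols (mJ x * mQ x) (mB x))).rank}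
      (SigmaH ℓ n m) ↔ ℓ ≤ n + m) ∧
    (ℓ > n + m →
      RelGeneric
        {x ∈ SigmaH ℓ n m |
          (Matrix.fromCols (mE x) (mB x)).rank =
            (Matrix.fromCols (mE x) (Matrix.fromCols (mJ x * mQ x) (mB x))).rank}ᶜ
        (SigmaH ℓ n m)) := by
  classical
  set S : Set (IdxH ℓ n m → ℝ) :=
    {x ∈ SigmaH ℓ n m |
      (Matrix.fromCols (mE x) (mB x)).rank =
        (Matrix.fromCols (mE x) (Matrix.fromCols (mJ x * mQ x) (mB x))).rank} with hSdef
  have hS2 : ℓ > n + m → RelGeneric Sᶜ (SigmaH ℓ n m) := by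
    intro hgt
    refine ⟨{x | ∀ j : Fin n, MvPolynomial.eval x (PHaux.P2 ℓ n m j) = 0},
      PHaux.isAlgebraic_W2, ?_, ?_⟩
    · rintro x ⟨hx1, hx2⟩
      have hxS : x ∈ S := by simpa using hx1
      refine ⟨?_, hx2⟩
      intro j
      by_contra hdj
      exact (PHaux.rank_ne_of_detP2_ne x j hdj) hxS.2
    · intro x hx
      have h1 := PHaux.density_case2_step1 (le_of_lt hgt) x hx
      have h2 : {y : IdxH ℓ n m → ℝ | y ∈ SigmaH ℓ n m ∧
          ((Matrix.fromCols (mE y) (mB y))ᵀ * Matrix.fromCols (mE y) (mB y)).det ≠ 0}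
          ⊆ closure ({x : IdxH ℓ n m → ℝ |
            ∀ j : Fin n, MvPolynomial.eval x (PHaux.P2 ℓ n m j) = 0}ᶜ ∩ SigmaH ℓ n m) :=
        fun y hy => PHaux.density_case2_step2 hgt hn hm y hy.1 hy.2
      have h3 := closure_mono h2
      rw [closure_closure] at h3
      exact h3 h1
  refine ⟨⟨?_, ?_⟩, hS2⟩
  · intro hgen
    by_contra hgt
    push_neg at hgt
    exact PHaux.not_both ⟨0, PHaux.sigma_nonempty⟩ hgen (hS2 hgt)
  · intro hle
    refine ⟨{x | MvPolynomial.eval x (PHaux.P1 ℓ n m) = 0}, PHaux.isAlgebraic_W1, ?_, ?_⟩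
    · rintro x ⟨hx1, hx2⟩
      refine ⟨?_, hx2⟩
      by_contra hdet
      exact hx1 ⟨hx2, PHaux.rank_eq_of_detP1_ne x hdet⟩
    · intro x hx
      exact PHaux.density_case1 hle x hx
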